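/- Suppose f : ℝ → ℝ is twice differentiable with ‖f'‖_∞ < ∞, ‖f''‖_∞ < ∞, and |f(x) - f(x')| ≤ A|x-x'|^{1-ε} whenever |x - x'| ≥ R, for some A > 0, R > 1, ε ∈ (0,1). Then the Hilbert transform of f', given by the principal value H(f')(x) = (1/π)∫_0^∞ (f'(x-t) - f'(x+t))/t dt, exists for every x and satisfies π‖H(f')‖_∞ ≤ 2‖f''‖_∞ + 2 log R · ‖f'‖_∞ + (2A/R^ε)(1 + 1/ε). -/

import Mathlib

open MeasureTheory intervalIntegral

theorem stmt8 (f f' f'' : ℝ → ℝ) (M1 M2 A R ε : ℝ)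
    (hder : ∀ x, HasDerivAt f (f' x) x) (hder2 : ∀ x, HasDerivAt f' (f'' x) x)
    (hM1 : ∀ x, |f' x| ≤ M1) (hM2 : ∀ x, |f'' x| ≤ M2)
    (hA : 0 < A) (hR : 1 < R) (hε : 0 < ε) (hε1 : ε < 1)
    (hHolder : ∀ x x' : ℝ, R ≤ |x - x'| → |f x - f x'| ≤ A * |x - x'| ^ (1 - ε)) :
    ∀ x : ℝ, ∃ Hx : ℝ,
      Filter.Tendsto (fun T : ℝ => ∫ t in (0 : ℝ)..T, (f' (x - t) - f' (x + t)) / t)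
        Filter.atTop (nhds Hx) ∧
      |Hx| ≤ 2 * M2 + 2 * Real.log R * M1 + (2 * A / R ^ ε) * (1 + 1 / ε) := by
  intro x
  have hR0 : (0:ℝ) < R := lt_trans one_pos hR
  have hM2nn : 0 ≤ M2 := le_trans (abs_nonneg _) (hM2 0)
  have hM1nn : 0 ≤ M1 := le_trans (abs_nonneg _) (hM1 0)
  have contf' : Continuous f' := by
    have h : Differentiable ℝ f' := fun y => (hder2 y).differentiableAt
    exact h.continuous
  have contf : Continuous f := by
    have h : Differentiable ℝ f := fun y => (hder y).differentiableAt
    exact h.continuous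
  -- Lipschitz bound for f'
  have lip : ∀ a b : ℝ, |f' a - f' b| ≤ M2 * |a - b| := by
    intro a b
    have := convex_univ.norm_image_sub_le_of_norm_hasDerivWithin_le
      (f := f') (f' := f'') (fun y _ => (hder2 y).hasDerivWithinAt)
      (fun y _ => by simpa [Real.norm_eq_abs] using hM2 y) (Set.mem_univ b) (Set.mem_univ a)
    simpa [Real.norm_eq_abs] using this
  set g : ℝ → ℝ := fun t => (f' (x - t) - f' (x + t)) / t with hgdef
  set u : ℝ → ℝ := fun t => f (x - t) + f (x + t) - 2 * f x with hudef
  have contu : Continuous u := by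
    apply Continuous.sub _ continuous_const
    exact (contf.comp (continuous_const.sub continuous_id)).add
      (contf.comp (continuous_const.add continuous_id))
  have hu : ∀ t : ℝ, HasDerivAt u (f' (x + t) - f' (x - t)) t := by
    intro t
    have h1 : HasDerivAt (fun s : ℝ => f (x - s)) (f' (x - t) * (-1)) t :=
      (hder (x - t)).comp t ((hasDerivAt_id t).const_sub x)
    have h2 : HasDerivAt (fun s : ℝ => f (x + s)) (f' (x + t) * 1) t :=
      (hder (x + t)).comp t ((hasDerivAt_id t).const_add x)
    have h3 := (h1.add h2).sub_const (2 * f x)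
    exact h3.congr_deriv (by ring)
  have hg_small : ∀ t : ℝ, 0 < t → |g t| ≤ 2 * M2 := by
    intro t ht
    have habs : |x - t - (x + t)| = 2 * t := by
      rw [show x - t - (x + t) = -(2 * t) by ring, abs_neg, abs_of_pos (by linarith)]
    have h1 : |f' (x - t) - f' (x + t)| ≤ M2 * (2 * t) := by
      have := lip (x - t) (x + t); rwa [habs] at this
    calc |g t| = |f' (x - t) - f' (x + t)| / t := by
          rw [hgdef, abs_div, abs_of_pos ht]
      _ ≤ M2 * (2 * t) / t := by gcongr
      _ = 2 * M2 := by field_simp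
  have contg : ContinuousOn g {t : ℝ | t ≠ 0} := by
    intro t ht
    exact (((contf'.comp (continuous_const.sub continuous_id)).sub
      (contf'.comp (continuous_const.add continuous_id))).continuousAt.div
      continuousAt_id ht).continuousWithinAt
  have intg : ∀ a b : ℝ, 0 < a → 0 < b → IntervalIntegrable g volume a b := by
    intro a b ha hb
    apply (contg.mono ?_).intervalIntegrable
    intro t ht
    rcases Set.mem_uIcc.mp ht with h | h <;>
      · simp only [Set.mem_setOf_eq]; intro h0; rw [h0] at h; rcases h with ⟨h1, h2⟩; linarith
  have int01 : IntervalIntegrable g volume 0 1 := by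
    rw [intervalIntegrable_iff]
    have hconst : IntegrableOn (fun _ : ℝ => 2 * M2) (Set.uIoc 0 1) volume :=
      (integrableOn_const_iff enorm_ne_top).mpr (Or.inr (by rw [Set.uIoc_of_le zero_le_one]; exact measure_Ioc_lt_top))
    apply Integrable.mono' hconst
    · have : Measurable g := by
        apply Measurable.div _ measurable_id
        exact ((contf'.comp (continuous_const.sub continuous_id)).sub
          (contf'.comp (continuous_const.add continuous_id))).measurable
      exact this.aestronglyMeasurable
    · filter_upwards [ae_restrict_mem measurableSet_uIoc] with t ht
      rw [Set.uIoc_of_le (zero_le_one)] at ht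
      rw [Real.norm_eq_abs]
      exact hg_small t ht.1
  have hu_growth : ∀ t : ℝ, R ≤ t → |u t| ≤ 2 * A * t ^ (1 - ε) := by
    intro t ht
    have ht0 : 0 < t := lt_of_lt_of_le hR0 ht
    have e1 : |x - t - x| = t := by
      rw [show x - t - x = -t by ring, abs_neg, abs_of_pos ht0]
    have e2 : |x + t - x| = t := by rw [show x + t - x = t by ring, abs_of_pos ht0]
    have h1 := hHolder (x - t) x (by rw [e1]; exact ht)
    have h2 := hHolder (x + t) x (by rw [e2]; exact ht)
    rw [e1] at h1; rw [e2] at h2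
    calc |u t| = |(f (x - t) - f x) + (f (x + t) - f x)| := by rw [hudef]; congr 1; ring
      _ ≤ |f (x - t) - f x| + |f (x + t) - f x| := abs_add_le _ _
      _ ≤ A * t ^ (1 - ε) + A * t ^ (1 - ε) := add_le_add h1 h2
      _ = 2 * A * t ^ (1 - ε) := by ring
  have rpow_bound : ∀ t : ℝ, R ≤ t → ‖u t / t ^ 2‖ ≤ 2 * A * t ^ (-1 - ε) := by
    intro t ht
    have ht0 : 0 < t := lt_of_lt_of_le hR0 ht
    have key : t ^ (-1 - ε) = t ^ (1 - ε) / t ^ 2 := by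
      rw [show (-1 : ℝ) - ε = (1 - ε) - 2 by ring, Real.rpow_sub ht0, Real.rpow_two]
    rw [Real.norm_eq_abs, abs_div, abs_of_pos (pow_pos ht0 2)]
    calc |u t| / t ^ 2 ≤ 2 * A * t ^ (1 - ε) / t ^ 2 := by gcongr; exact hu_growth t ht
      _ = 2 * A * t ^ (-1 - ε) := by rw [key]; ring
  have hIoi : IntegrableOn (fun t => u t / t ^ 2) (Set.Ioi R) volume := by
    have hdom : IntegrableOn (fun t : ℝ => 2 * A * t ^ (-1 - ε)) (Set.Ioi R) volume :=
      (integrableOn_Ioi_rpow_of_lt (by linarith) hR0).const_mul (2 * A)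
    apply Integrable.mono' hdom
    · apply ContinuousOn.aestronglyMeasurable ?_ measurableSet_Ioi
      apply contu.continuousOn.div (continuous_pow 2).continuousOn
      intro t ht
      have : 0 < t := lt_trans hR0 ht
      positivity
    · filter_upwards [ae_restrict_mem measurableSet_Ioi] with t ht
      exact rpow_bound t (le_of_lt ht)
  -- integration by parts
  have ibp : ∀ T : ℝ, R ≤ T →
      ∫ t in R..T, g t = u R / R - u T / T - ∫ t in R..T, u t / t ^ 2 := by
    intro T hT
    have huIcc : Set.uIcc R T = Set.Icc R T := Set.uIcc_of_le hT
    have hpos : ∀ t ∈ Set.uIcc R T, 0 < t := by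
      intro t ht; rw [huIcc] at ht; exact lt_of_lt_of_le hR0 ht.1
    have hint1 : IntervalIntegrable (fun t : ℝ => -(t ^ 2)⁻¹) volume R T := by
      apply ContinuousOn.intervalIntegrable
      apply ContinuousOn.neg
      apply ContinuousOn.inv₀ (continuous_pow 2).continuousOn
      intro t ht
      have := hpos t ht; positivity
    have hint2 : IntervalIntegrable (fun t : ℝ => f' (x + t) - f' (x - t)) volume R T :=
      ((contf'.comp (continuous_const.add continuous_id)).sub
        (contf'.comp (continuous_const.sub continuous_id))).intervalIntegrable R T
    have H := integral_mul_deriv_eq_deriv_mul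
      (u := fun t : ℝ => t⁻¹) (u' := fun t : ℝ => -(t ^ 2)⁻¹)
      (v := u) (v' := fun t : ℝ => f' (x + t) - f' (x - t))
      (fun t ht => hasDerivAt_inv (ne_of_gt (hpos t ht)))
      (fun t _ => hu t) hint1 hint2
    have hgeq : ∀ t : ℝ, g t = -(t⁻¹ * (f' (x + t) - f' (x - t))) := by
      intro t; rw [hgdef]; simp only [div_eq_mul_inv]; ring
    have e : ∀ t : ℝ, -(t ^ 2)⁻¹ * u t = -(u t / t ^ 2) := by
      intro t; rw [div_eq_mul_inv]; ring
    calc (∫ t in R..T, g t)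
        = ∫ t in R..T, -(t⁻¹ * (f' (x + t) - f' (x - t))) := by simp_rw [hgeq]
      _ = -∫ t in R..T, t⁻¹ * (f' (x + t) - f' (x - t)) := intervalIntegral.integral_neg
      _ = -(T⁻¹ * u T - R⁻¹ * u R - ∫ t in R..T, -(t ^ 2)⁻¹ * u t) := by rw [H]
      _ = u R / R - u T / T - ∫ t in R..T, u t / t ^ 2 := by
          simp_rw [e]
          rw [intervalIntegral.integral_neg]
          simp only [div_eq_mul_inv]
          ring
  have lim_tail : Filter.Tendsto (fun T => ∫ t in R..T, u t / t ^ 2) Filter.atTop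
      (nhds (∫ t in Set.Ioi R, u t / t ^ 2)) :=
    intervalIntegral_tendsto_integral_Ioi R hIoi Filter.tendsto_id
  have lim_uT : Filter.Tendsto (fun T => u T / T) Filter.atTop (nhds 0) := by
    apply squeeze_zero_norm' (a := fun T => 2 * A * T ^ (-ε))
    · filter_upwards [Filter.eventually_ge_atTop R] with T hT
      have hT0 : 0 < T := lt_of_lt_of_le hR0 hT
      have key : T ^ (-ε) = T ^ (1 - ε) / T := by
        rw [show -ε = (1 - ε) - 1 by ring, Real.rpow_sub hT0, Real.rpow_one]
      rw [Real.norm_eq_abs, abs_div, abs_of_pos hT0]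
      calc |u T| / T ≤ 2 * A * T ^ (1 - ε) / T := by gcongr; exact hu_growth T hT
        _ = 2 * A * T ^ (-ε) := by rw [key]; ring
    · have := (tendsto_rpow_neg_atTop hε).const_mul (2 * A)
      simpa using this
  have int1R : IntervalIntegrable g volume 1 R := intg 1 R one_pos hR0
  refine ⟨(∫ t in (0:ℝ)..1, g t) + (∫ t in (1:ℝ)..R, g t) +
      (u R / R - 0 - ∫ t in Set.Ioi R, u t / t ^ 2), ?_, ?_⟩
  · apply Filter.Tendsto.congr'
      (f₁ := fun T => (∫ t in (0:ℝ)..1, g t) + (∫ t in (1:ℝ)..R, g t) +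
        (u R / R - u T / T - ∫ t in R..T, u t / t ^ 2))
    · filter_upwards [Filter.eventually_ge_atTop R] with T hT
      have intRT : IntervalIntegrable g volume R T := intg R T hR0 (lt_of_lt_of_le hR0 hT)
      rw [← ibp T hT, add_assoc,
        intervalIntegral.integral_add_adjacent_intervals int1R intRT,
        intervalIntegral.integral_add_adjacent_intervals int01 (int1R.trans intRT)]
    · exact tendsto_const_nhds.add ((tendsto_const_nhds.sub lim_uT).sub lim_tail)
  · -- the bound
    have hRε : (0:ℝ) < R ^ ε := Real.rpow_pos_of_pos hR0 ε
    have b1 : |∫ t in (0:ℝ)..1, g t| ≤ 2 * M2 := by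
      have h := intervalIntegral.norm_integral_le_of_norm_le_const
        (C := 2 * M2) (f := g) (a := 0) (b := 1) ?_
      · rw [Real.norm_eq_abs] at h; simpa using h
      · intro t ht
        rw [Set.uIoc_of_le zero_le_one] at ht
        rw [Real.norm_eq_abs]
        exact hg_small t ht.1
    have b2 : |∫ t in (1:ℝ)..R, g t| ≤ 2 * M1 * Real.log R := by
      have habs : |∫ t in (1:ℝ)..R, g t| ≤ ∫ t in (1:ℝ)..R, |g t| :=
        intervalIntegral.abs_integral_le_integral_abs hR.le
      have hint2 : IntervalIntegrable (fun t : ℝ => 2 * M1 * t⁻¹) volume 1 R := by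
        apply ContinuousOn.intervalIntegrable
        apply ContinuousOn.mul continuousOn_const
        apply ContinuousOn.inv₀ continuousOn_id
        intro t ht
        rw [Set.uIcc_of_le hR.le] at ht
        have : (0:ℝ) < t := lt_of_lt_of_le one_pos ht.1
        simpa using this.ne'
      have hmono : (∫ t in (1:ℝ)..R, |g t|) ≤ ∫ t in (1:ℝ)..R, 2 * M1 * t⁻¹ := by
        apply intervalIntegral.integral_mono_on hR.le int1R.abs hint2
        intro t ht
        have ht0 : (0:ℝ) < t := lt_of_lt_of_le one_pos ht.1
        rw [hgdef, abs_div, abs_of_pos ht0]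
        rw [div_eq_mul_inv, mul_comm (2 * M1) t⁻¹, mul_comm _ t⁻¹]
        gcongr
        calc |f' (x - t) - f' (x + t)| ≤ |f' (x - t)| + |f' (x + t)| := abs_sub _ _
          _ ≤ M1 + M1 := add_le_add (hM1 _) (hM1 _)
          _ = 2 * M1 := by ring
      have hval : (∫ t in (1:ℝ)..R, 2 * M1 * t⁻¹) = 2 * M1 * Real.log R := by
        rw [intervalIntegral.integral_const_mul, integral_inv_of_pos one_pos hR0]
        simp
      linarith
    have b3 : |u R / R| ≤ 2 * A / R ^ ε := by
      rw [abs_div, abs_of_pos hR0]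
      have key : R ^ ((1:ℝ) - ε) / R = (R ^ ε)⁻¹ := by
        rw [show (1:ℝ) - ε = 1 + -ε by ring, Real.rpow_add hR0, Real.rpow_one,
          Real.rpow_neg hR0.le]
        field_simp
      calc |u R| / R ≤ 2 * A * R ^ ((1:ℝ) - ε) / R := by gcongr; exact hu_growth R le_rfl
        _ = 2 * A * (R ^ ((1:ℝ) - ε) / R) := by ring
        _ = 2 * A / R ^ ε := by rw [key, div_eq_mul_inv]
    have b4 : |∫ t in Set.Ioi R, u t / t ^ 2| ≤ 2 * A / R ^ ε * (1 / ε) := by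
      have hdom : IntegrableOn (fun t : ℝ => 2 * A * t ^ (-1 - ε)) (Set.Ioi R) volume :=
        (integrableOn_Ioi_rpow_of_lt (by linarith) hR0).const_mul (2 * A)
      have hnorm := MeasureTheory.norm_integral_le_of_norm_le hdom
        (by filter_upwards [ae_restrict_mem measurableSet_Ioi] with t ht
            exact rpow_bound t (le_of_lt ht))
      have hval : (∫ t in Set.Ioi R, 2 * A * t ^ (-1 - ε)) = 2 * A / R ^ ε * (1 / ε) := by
        rw [MeasureTheory.integral_const_mul, integral_Ioi_rpow_of_lt (by linarith) hR0,
          show (-1:ℝ) - ε + 1 = -ε by ring, Real.rpow_neg hR0.le]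
        have hε0 : ε ≠ 0 := ne_of_gt hε
        have hRε0 : (R:ℝ) ^ ε ≠ 0 := ne_of_gt (Real.rpow_pos_of_pos hR0 ε)
        field_simp
      rw [Real.norm_eq_abs] at hnorm
      linarith
    have habs1 : |(∫ t in (0:ℝ)..1, g t) + (∫ t in (1:ℝ)..R, g t) +
        (u R / R - 0 - ∫ t in Set.Ioi R, u t / t ^ 2)|
        ≤ |∫ t in (0:ℝ)..1, g t| + |∫ t in (1:ℝ)..R, g t| +
          (|u R / R| + |∫ t in Set.Ioi R, u t / t ^ 2|) := by
      refine le_trans (abs_add_le _ _) ?_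
      refine add_le_add (abs_add_le _ _) ?_
      rw [sub_zero]
      exact abs_sub _ _
    have hring : 2 * A / R ^ ε * (1 + 1 / ε) = 2 * A / R ^ ε + 2 * A / R ^ ε * (1 / ε) := by
      ring
    have hcomm : 2 * M1 * Real.log R = 2 * Real.log R * M1 := by ring
    linarith
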